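/- If (Σ, dom) is disconnected, then the family of locally monitorable subsets of ℝ is not closed under union: with a, b in different connected components, the sets L = "no occurrence of a" and K = "no occurrence of b" are both locally monitorable, but L ∪ K is not. -/
import Mathlib


/-!
Abstract setting for real Mazurkiewicz traces: `T` is the set ℝ of real
traces with the prefix partial order, `P : Set T` is the set 𝒫 of prime
traces, `cone p` is `pℝ = {t : p ≤ t}`.
-/

namespace MzTrace

variable {T : Type} [PartialOrder T]

/-- `cone p` models `pℝ`, the set of traces having `p` as a prefix. -/
def cone (p : T) : Set T := Set.Ici p

/-- A set of traces is prime-open (w.r.t. the set `P` of prime traces)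
if it is a union `⋃ {pℝ : p ∈ U}` for some `U ⊆ P`. -/
def PrimeOpen (P : Set T) (L : Set T) : Prop := ∃ U ⊆ P, L = ⋃ p ∈ U, cone p

/-- A set is prime-closed if its complement is prime-open. -/
def PrimeClosed (P : Set T) (L : Set T) : Prop := PrimeOpen P Lᶜ

/-- The prime closure of `L`: the intersection of all prime-closed supersets. -/
def primeClosure (P : Set T) (L : Set T) : Set T := ⋂₀ {K | PrimeClosed P K ∧ L ⊆ K}

/-- A set `C` of traces is coherent if it has a common upper bound (a trace
`t` with `C ⊆ pref(t)`). -/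
def Coherent (C : Set T) : Prop := BddAbove C

/-- `primePref P L` is `𝒫(L)`, the set of prime prefixes of elements of `L`. -/
def primePref (P : Set T) (L : Set T) : Set T := {p ∈ P | ∃ t ∈ L, p ≤ t}

/-- `L` is locally monitorable: for every prime `s` there is a prime `t`
with `{s,t}` coherent (i.e. `s ≤ tℝ`) and `tℝ ⊆ L` or `tℝ ⊆ Lᶜ`. -/
def LocallyMonitorable (P : Set T) (L : Set T) : Prop :=
  ∀ s ∈ P, ∃ t ∈ P, Coherent {s, t} ∧ (cone t ⊆ L ∨ cone t ⊆ Lᶜ)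

end MzTrace

namespace MzTrace

/-!
STATEMENT 10: a disconnected alphabet where locally monitorable sets are not
closed under union.  We take the disconnected distributed alphabet
`Σ = {a, b}` with `a` and `b` independent (in different connected
components).  A real trace over this alphabet is determined by its number of
`a`'s and of `b`'s, so `ℝ ≅ ℕ∞ × ℕ∞` with the componentwise (prefix) order;
the primes are the nonempty finite traces using only one of the letters.
-/

/-- Real traces over two independent letters `a, b`. -/
abbrev TwoTr : Type := ℕ∞ × ℕ∞

/-- The prime traces: a nonzero finite number of `a`'s (and no `b`), or
symmetrically. -/
def twoPrimes : Set TwoTr :=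
  {x | (1 ≤ x.1 ∧ x.1 ≠ ⊤ ∧ x.2 = 0) ∨ (1 ≤ x.2 ∧ x.2 ≠ ⊤ ∧ x.1 = 0)}

/-- `L` = "no occurrence of `a`". -/
def noA : Set TwoTr := {x | x.1 = 0}

/-- `K` = "no occurrence of `b`". -/
def noB : Set TwoTr := {x | x.2 = 0}

/-- with `a, b` in different connected components, the sets
"no occurrence of `a`" and "no occurrence of `b`" are both locally
monitorable, but their union is not; so for a disconnected alphabet the
locally monitorable sets are not closed under union. -/
theorem disconnected_not_closed_under_union :
    LocallyMonitorable twoPrimes noA ∧ LocallyMonitorable twoPrimes noB ∧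
    ¬ LocallyMonitorable twoPrimes (noA ∪ noB) := by
  have hbdd : ∀ C : Set TwoTr, Coherent C :=
    fun C => ⟨(⊤, ⊤), fun x _ => ⟨le_top, le_top⟩⟩
  refine ⟨?_, ?_, ?_⟩
  · intro s hs
    refine ⟨(1, 0), Or.inl ⟨le_refl 1, by simp, rfl⟩, hbdd _, Or.inr ?_⟩
    intro x hx h
    have h1 : (1 : ℕ∞) ≤ x.1 := hx.1
    simp only [noA, Set.mem_setOf_eq] at h
    rw [h] at h1
    exact absurd h1 (by simp)
  · intro s hs
    refine ⟨(0, 1), Or.inr ⟨le_refl 1, by simp, rfl⟩, hbdd _, Or.inr ?_⟩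
    intro x hx h
    have h1 : (1 : ℕ∞) ≤ x.2 := hx.2
    simp only [noB, Set.mem_setOf_eq] at h
    rw [h] at h1
    exact absurd h1 (by simp)
  · intro hmon
    obtain ⟨t, ht, _, hc⟩ := hmon (1, 0) (Or.inl ⟨le_refl 1, by simp, rfl⟩)
    rcases hc with hc | hc
    · have : ((⊤, ⊤) : TwoTr) ∈ noA ∪ noB := hc ⟨le_top, le_top⟩
      rcases this with h | h <;> simp [noA, noB] at h
    · have htt : t ∉ noA ∪ noB := hc (le_refl t)
      rcases ht with ⟨_, _, h2⟩ | ⟨_, _, h1⟩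
      · exact htt (Or.inr h2)
      · exact htt (Or.inl h1)

end MzTrace
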